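/- arXiv:2407.05353 — 3 statements merged into one kernel-verified Lean document; each statement's English description precedes it below -/
import Mathlib

section
/- For every γ ∈ ℂ with Re γ > 0 and every T > 0, one has ⟨ψ_T ⊗_{0,1} ψ_T, h_T⟩ = 0 and ⟨ψ_T ⊗_{1,0} ψ_T, h_T⟩ = 0; in particular ⟨ψ_T ⊗_{0,1} ψ_T, h_T⟩ + ⟨ψ_T ⊗_{1,0} ψ_T, h_T⟩ = 0. -/
open MeasureTheory

/-- The kernel `ψ_T(t; s) = T^{−1/2} e^{−conj(γ)(t−s)} 1_{0 ≤ s ≤ t ≤ T}`. -/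
noncomputable def psiKer (γ : ℂ) (T t s : ℝ) : ℂ :=
  ((Real.sqrt T)⁻¹ : ℝ) * Complex.exp (-(starRingEnd ℂ γ) * ((t : ℂ) - (s : ℂ)))
    * (if 0 ≤ s ∧ s ≤ t ∧ t ≤ T then 1 else 0)

/-- The kernel `h_T(t; s) = T^{−1/2} e^{−γ(s−t)} 1_{0 ≤ t ≤ s ≤ T}`, the reverse complex
conjugate of `ψ_T`. -/
noncomputable def hKer (γ : ℂ) (T t s : ℝ) : ℂ :=
  ((Real.sqrt T)⁻¹ : ℝ) * Complex.exp (-γ * ((s : ℂ) - (t : ℂ)))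
    * (if 0 ≤ t ∧ t ≤ s ∧ s ≤ T then 1 else 0)

/-- The contraction `f ⊗_{0,1} g (t; s) = ∫₀^∞ f(t; v) g(v; s) dv`. -/
noncomputable def contr01 (f g : ℝ → ℝ → ℂ) (t s : ℝ) : ℂ :=
  ∫ v in Set.Ioi (0 : ℝ), f t v * g v s

/-- The contraction `f ⊗_{1,0} g (t; s) = ∫₀^∞ f(u; s) g(t; u) du`. -/
noncomputable def contr10 (f g : ℝ → ℝ → ℂ) (t s : ℝ) : ℂ :=
  ∫ u in Set.Ioi (0 : ℝ), f u s * g t u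

lemma psiKer_mul_eq_zero (γ : ℂ) (T t s v : ℝ) (hts : t ≤ s) (hvs : v ≠ s) :
    psiKer γ T t v * psiKer γ T v s = 0 := by
  by_cases h1 : 0 ≤ v ∧ v ≤ t ∧ t ≤ T
  · by_cases h2 : 0 ≤ s ∧ s ≤ v ∧ v ≤ T
    · exact absurd (le_antisymm (h1.2.1.trans hts) h2.2.1) hvs
    · simp [psiKer, h2]
  · simp [psiKer, h1]

lemma ae_ne_line (s : ℝ) : ∀ᵐ v ∂(volume.restrict (Set.Ioi (0 : ℝ))), v ≠ s := by
  refine ae_restrict_of_ae ?_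
  rw [MeasureTheory.ae_iff]
  simpa using measure_singleton (μ := (volume : Measure ℝ)) s

lemma contr01_eq_zero (γ : ℂ) (T t s : ℝ) (hts : t ≤ s) :
    contr01 (psiKer γ T) (psiKer γ T) t s = 0 := by
  unfold contr01
  rw [MeasureTheory.integral_eq_zero_of_ae]
  filter_upwards [ae_ne_line s] with v hv
  exact psiKer_mul_eq_zero γ T t s v hts hv

lemma contr10_eq_zero (γ : ℂ) (T t s : ℝ) (hts : t ≤ s) :
    contr10 (psiKer γ T) (psiKer γ T) t s = 0 := by
  unfold contr10
  rw [MeasureTheory.integral_eq_zero_of_ae]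
  filter_upwards [ae_ne_line s] with u hu
  rw [mul_comm]
  exact psiKer_mul_eq_zero γ T t s u hts hu

lemma hKer_eq_zero (γ : ℂ) (T t s : ℝ) (hst : s < t) : hKer γ T t s = 0 := by
  simp [hKer, not_le.mpr hst]

/-- For every `γ ∈ ℂ` with `Re γ > 0` and every `T > 0`,
`⟨ψ_T ⊗_{0,1} ψ_T, h_T⟩ = 0` and `⟨ψ_T ⊗_{1,0} ψ_T, h_T⟩ = 0`; in particular their sum
vanishes. -/
theorem inner_contractions_psiKer_hKer_eq_zero (γ : ℂ) (hγ : 0 < γ.re) (T : ℝ) (hT : 0 < T) :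
    ((∫ t in Set.Ioi (0 : ℝ), ∫ s in Set.Ioi (0 : ℝ),
          contr01 (psiKer γ T) (psiKer γ T) t s * starRingEnd ℂ (hKer γ T t s)) = 0
        ∧ (∫ t in Set.Ioi (0 : ℝ), ∫ s in Set.Ioi (0 : ℝ),
          contr10 (psiKer γ T) (psiKer γ T) t s * starRingEnd ℂ (hKer γ T t s)) = 0)
      ∧ (∫ t in Set.Ioi (0 : ℝ), ∫ s in Set.Ioi (0 : ℝ),
            contr01 (psiKer γ T) (psiKer γ T) t s * starRingEnd ℂ (hKer γ T t s))
          + (∫ t in Set.Ioi (0 : ℝ), ∫ s in Set.Ioi (0 : ℝ),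
            contr10 (psiKer γ T) (psiKer γ T) t s * starRingEnd ℂ (hKer γ T t s)) = 0 := by
  have key01 : ∀ t s : ℝ,
      contr01 (psiKer γ T) (psiKer γ T) t s * starRingEnd ℂ (hKer γ T t s) = 0 := by
    intro t s
    rcases le_or_gt t s with h | h
    · rw [contr01_eq_zero γ T t s h, zero_mul]
    · rw [hKer_eq_zero γ T t s h, map_zero, mul_zero]
  have key10 : ∀ t s : ℝ,
      contr10 (psiKer γ T) (psiKer γ T) t s * starRingEnd ℂ (hKer γ T t s) = 0 := by
    intro t s
    rcases le_or_gt t s with h | h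
    · rw [contr10_eq_zero γ T t s h, zero_mul]
    · rw [hKer_eq_zero γ T t s h, map_zero, mul_zero]
  simp only [key01, key10, integral_zero, add_zero]
  exact ⟨⟨trivial, trivial⟩, trivial⟩
end

section
/- Fix γ ∈ ℂ with Re γ > 0. There exist constants 0 < c₁ ≤ c₂ < ∞ and T₀ > 0, depending only on γ, such that for all T ≥ T₀: c₁·T^{−1/2} ≤ |⟨ψ_T ⊗_{0,1} ψ_T, ψ_T⟩ + ⟨ψ_T ⊗_{1,0} ψ_T, ψ_T⟩| ≤ c₂·T^{−1/2}. -/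
open MeasureTheory

/-- The `L²([0,∞)²)` inner product `⟨f, g⟩ = ∫₀^∞ ∫₀^∞ f(t; s) conj(g(t; s)) dt ds`. -/
noncomputable def kerInner (f g : ℝ → ℝ → ℂ) : ℂ :=
  ∫ t in Set.Ioi (0 : ℝ), ∫ s in Set.Ioi (0 : ℝ), f t s * starRingEnd ℂ (g t s)


lemma F_eval (l : ℝ) (hl : 0 < l) (t : ℝ) :
    ∫ u in (0:ℝ)..t, u * Real.exp (-(2*l)*u)
      = 1/(4*l^2) - (t/(2*l)+1/(4*l^2)) * Real.exp (-(2*l)*t) := by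
  have hderiv : ∀ u ∈ Set.uIcc (0:ℝ) t,
      HasDerivAt (fun u : ℝ => -(u/(2*l)+1/(4*l^2)) * Real.exp (-(2*l)*u))
        (u * Real.exp (-(2*l)*u)) u := by
    intro u _
    have h1 : HasDerivAt (fun u : ℝ => Real.exp (-(2*l)*u)) ((-(2*l)) * Real.exp (-(2*l)*u)) u := by
      simpa [mul_comm] using ((hasDerivAt_id u).const_mul (-(2*l))).exp
    have h2 : HasDerivAt (fun u : ℝ => -(u/(2*l)+1/(4*l^2))) (-(1/(2*l))) u := by
      exact (((hasDerivAt_id u).div_const (2*l)).add_const (1/(4*l^2))).neg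
    have := h2.mul h1
    refine this.congr_deriv ?_
    field_simp
    try ring
  rw [intervalIntegral.integral_eq_sub_of_hasDerivAt hderiv]
  · simp
    try ring
  · exact (Continuous.mul continuous_id (Real.continuous_exp.comp (by continuity))).intervalIntegrable _ _

lemma J_eval (l : ℝ) (hl : 0 < l) (T : ℝ) :
    ∫ t in (0:ℝ)..T, (1/(4*l^2) - (t/(2*l)+1/(4*l^2)) * Real.exp (-(2*l)*t))
      = T/(4*l^2) + (T/(4*l^2)+1/(4*l^3)) * Real.exp (-(2*l)*T) - 1/(4*l^3) := by
  have hderiv : ∀ t ∈ Set.uIcc (0:ℝ) T,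
      HasDerivAt (fun t : ℝ => t/(4*l^2) + (t/(4*l^2)+1/(4*l^3)) * Real.exp (-(2*l)*t))
        (1/(4*l^2) - (t/(2*l)+1/(4*l^2)) * Real.exp (-(2*l)*t)) t := by
    intro t _
    have h1 : HasDerivAt (fun u : ℝ => Real.exp (-(2*l)*u)) ((-(2*l)) * Real.exp (-(2*l)*t)) t := by
      simpa [mul_comm] using ((hasDerivAt_id t).const_mul (-(2*l))).exp
    have h2 : HasDerivAt (fun u : ℝ => u/(4*l^2)+1/(4*l^3)) (1/(4*l^2)) t := by
      exact ((hasDerivAt_id t).div_const (4*l^2)).add_const (1/(4*l^3))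
    have h3 : HasDerivAt (fun u : ℝ => u/(4*l^2)) (1/(4*l^2)) t := by
      exact (hasDerivAt_id t).div_const (4*l^2)
    have := h3.add (h2.mul h1)
    refine this.congr_deriv ?_
    field_simp
    try ring
  rw [intervalIntegral.integral_eq_sub_of_hasDerivAt hderiv]
  · simp
    try ring
  · apply Continuous.intervalIntegrable
    continuity


lemma Ioi_inter_Icc' (T : ℝ) : Set.Ioi (0:ℝ) ∩ Set.Icc 0 T = Set.Ioc 0 T := by
  ext x
  simp only [Set.mem_inter_iff, Set.mem_Ioi, Set.mem_Icc, Set.mem_Ioc]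
  constructor
  · rintro ⟨h1, _, h3⟩; exact ⟨h1, h3⟩
  · rintro ⟨h1, h2⟩; exact ⟨h1, h1.le, h2⟩

lemma inner_eq (l T t : ℝ) :
    (∫ s in Set.Ioi (0:ℝ),
        (if 0 ≤ s ∧ s ≤ t ∧ t ≤ T then (t - s) * Real.exp (-(2*l)*(t-s)) else 0))
      = Set.indicator (Set.Icc 0 T)
          (fun u => ∫ x in (0:ℝ)..u, x * Real.exp (-(2*l)*x)) t := by
  by_cases ht : 0 ≤ t ∧ t ≤ T
  · rw [Set.indicator_of_mem (Set.mem_Icc.2 ht)]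
    have h1 : ∀ s : ℝ,
        (if 0 ≤ s ∧ s ≤ t ∧ t ≤ T then (t - s) * Real.exp (-(2*l)*(t-s)) else 0)
          = Set.indicator (Set.Icc 0 t) (fun s => (t - s) * Real.exp (-(2*l)*(t-s))) s := by
      intro s
      by_cases hs : 0 ≤ s ∧ s ≤ t
      · rw [Set.indicator_of_mem (Set.mem_Icc.2 hs), if_pos ⟨hs.1, hs.2, ht.2⟩]
      · rw [Set.indicator_of_notMem (by simpa [Set.mem_Icc] using hs),
          if_neg (fun hc => hs ⟨hc.1, hc.2.1⟩)]
    simp only [h1]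
    rw [MeasureTheory.setIntegral_indicator measurableSet_Icc]
    have h2 : Set.Ioi (0:ℝ) ∩ Set.Icc 0 t = Set.Ioc 0 t := Ioi_inter_Icc' t
    rw [h2, ← intervalIntegral.integral_of_le ht.1,
      show (∫ s in (0:ℝ)..t, (t-s) * Real.exp (-(2*l)*(t-s)))
          = ∫ x in (t-t)..(t-0), x * Real.exp (-(2*l)*x) from
        intervalIntegral.integral_comp_sub_left (fun x => x * Real.exp (-(2*l)*x)) t]
    norm_num
  · rw [Set.indicator_of_notMem (by simpa [Set.mem_Icc] using ht)]
    have h1 : ∀ s : ℝ,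
        (if 0 ≤ s ∧ s ≤ t ∧ t ≤ T then (t - s) * Real.exp (-(2*l)*(t-s)) else 0) = 0 := by
      intro s
      rw [if_neg]
      rintro ⟨hs1, hs2, hs3⟩
      exact ht ⟨le_trans hs1 hs2, hs3⟩
    simp only [h1, integral_zero]

lemma pointwise (γ : ℂ) (T : ℝ) (hT : 0 < T) (t s : ℝ) :
    contr01 (psiKer γ T) (psiKer γ T) t s * starRingEnd ℂ (psiKer γ T t s)
      = ((((Real.sqrt T)⁻¹ * T⁻¹ *
          (if 0 ≤ s ∧ s ≤ t ∧ t ≤ T then (t - s) * Real.exp (-(2*γ.re)*(t-s)) else 0)) : ℝ) : ℂ) := by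
  by_cases h : 0 ≤ s ∧ s ≤ t ∧ t ≤ T
  · obtain ⟨hs, hst, htT⟩ := h
    have hint : ∀ v : ℝ, psiKer γ T t v * psiKer γ T v s
        = Set.indicator (Set.Icc s t)
            (fun _ => (((Real.sqrt T)⁻¹ : ℝ) : ℂ) * ((Real.sqrt T)⁻¹ : ℝ)
              * Complex.exp (-(starRingEnd ℂ γ) * ((t:ℂ) - (s:ℂ)))) v := by
      intro v
      by_cases hv : s ≤ v ∧ v ≤ t
      · have h1 : (0:ℝ) ≤ v := le_trans hs hv.1
        have h2 : v ≤ T := le_trans hv.2 htT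
        rw [Set.indicator_of_mem (Set.mem_Icc.2 hv)]
        unfold psiKer
        rw [if_pos ⟨h1, hv.2, htT⟩, if_pos ⟨hs, hv.1, h2⟩, mul_one, mul_one]
        rw [mul_mul_mul_comm, ← Complex.exp_add]
        congr 2
        ring
      · rw [Set.indicator_of_notMem (by simpa [Set.mem_Icc] using hv)]
        unfold psiKer
        rcases not_and_or.1 hv with h' | h'
        · have hx : ¬(0 ≤ s ∧ s ≤ v ∧ v ≤ T) := fun hc => h' hc.2.1
          rw [if_neg hx]; simp
        · have hx : ¬((0:ℝ) ≤ v ∧ v ≤ t ∧ t ≤ T) := fun hc => h' hc.2.1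
          rw [if_neg hx]; simp
    have hcontr : contr01 (psiKer γ T) (psiKer γ T) t s
        = (t - s) * ((((Real.sqrt T)⁻¹ : ℝ) : ℂ) * ((Real.sqrt T)⁻¹ : ℝ)
            * Complex.exp (-(starRingEnd ℂ γ) * ((t:ℂ) - (s:ℂ)))) := by
      unfold contr01
      simp only [hint]
      rw [MeasureTheory.setIntegral_indicator measurableSet_Icc,
        MeasureTheory.setIntegral_const]
      have hvol : volume (Set.Ioi (0:ℝ) ∩ Set.Icc s t) = ENNReal.ofReal (t - s) := by
        apply le_antisymm
        · exact le_trans (measure_mono Set.inter_subset_right) (le_of_eq Real.volume_Icc)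
        · refine le_trans (le_of_eq Real.volume_Ioc.symm) (measure_mono ?_)
          intro x hx
          exact ⟨lt_of_le_of_lt hs hx.1, le_of_lt hx.1, hx.2⟩
      rw [measureReal_def, hvol, ENNReal.toReal_ofReal (sub_nonneg.2 hst)]
      simp [Complex.real_smul]
    rw [hcontr]
    have hconj : starRingEnd ℂ (psiKer γ T t s)
        = (((Real.sqrt T)⁻¹ : ℝ) : ℂ) * Complex.exp (-γ * ((t:ℂ) - (s:ℂ))) := by
      unfold psiKer
      rw [if_pos ⟨hs, hst, htT⟩, mul_one, map_mul, ← Complex.exp_conj]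
      simp [Complex.conj_ofReal]
    rw [hconj]
    have hexp' : Complex.exp (-(starRingEnd ℂ γ) * ((t:ℂ)-(s:ℂ))) * Complex.exp (-γ * ((t:ℂ)-(s:ℂ)))
        = Complex.exp (-(2*((γ.re:ℝ):ℂ)) * ((t:ℂ)-(s:ℂ))) := by
      rw [← Complex.exp_add]
      congr 1
      have hc : (starRingEnd ℂ γ) + γ = ((2*γ.re : ℝ) : ℂ) := by
        rw [add_comm]
        exact_mod_cast Complex.add_conj γ
      push_cast at hc ⊢
      linear_combination ((s:ℂ) - (t:ℂ)) * hc
    have hTc : ((Real.sqrt T : ℝ) : ℂ) * ((Real.sqrt T : ℝ) : ℂ) = (T : ℂ) := by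
      exact_mod_cast Real.mul_self_sqrt hT.le
    rw [if_pos ⟨hs, hst, htT⟩]
    push_cast
    rw [← hTc, mul_inv, ← hexp']
    ring
  · simp [psiKer, contr01, if_neg h]

lemma contr10_eq (f : ℝ → ℝ → ℂ) : contr10 f f = contr01 f f := by
  funext t s
  unfold contr01 contr10
  rw [show (fun u => f u s * f t u) = (fun u => f t u * f u s) from
    funext fun u => mul_comm _ _]

lemma kerInner_eq (γ : ℂ) (hl : 0 < γ.re) (T : ℝ) (hT : 0 < T) :
    kerInner (contr01 (psiKer γ T) (psiKer γ T)) (psiKer γ T)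
      = (((Real.sqrt T)⁻¹ * T⁻¹ *
          (T/(4*γ.re^2) + (T/(4*γ.re^2)+1/(4*γ.re^3)) * Real.exp (-(2*γ.re)*T)
            - 1/(4*γ.re^3)) : ℝ) : ℂ) := by
  unfold kerInner
  have hpt := pointwise γ T hT
  simp only [hpt]
  have hinner : ∀ t : ℝ,
      (∫ s in Set.Ioi (0:ℝ), ((((Real.sqrt T)⁻¹ * T⁻¹ *
          (if 0 ≤ s ∧ s ≤ t ∧ t ≤ T then (t - s) * Real.exp (-(2*γ.re)*(t-s)) else 0)) : ℝ) : ℂ))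
        = ((((Real.sqrt T)⁻¹ * T⁻¹ * Set.indicator (Set.Icc 0 T)
            (fun u => ∫ x in (0:ℝ)..u, x * Real.exp (-(2*γ.re)*x)) t) : ℝ) : ℂ) := by
    intro t
    refine (integral_ofReal (𝕜 := ℂ)).trans ?_
    have hre : (∫ s in Set.Ioi (0:ℝ), (Real.sqrt T)⁻¹ * T⁻¹ *
        (if 0 ≤ s ∧ s ≤ t ∧ t ≤ T then (t - s) * Real.exp (-(2*γ.re)*(t-s)) else 0))
        = (Real.sqrt T)⁻¹ * T⁻¹ * Set.indicator (Set.Icc 0 T)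
            (fun u => ∫ x in (0:ℝ)..u, x * Real.exp (-(2*γ.re)*x)) t := by
      rw [MeasureTheory.integral_const_mul, inner_eq]
    exact congrArg Complex.ofReal hre
  simp only [hinner]
  refine (integral_ofReal (𝕜 := ℂ)).trans ?_
  have hre : (∫ t in Set.Ioi (0:ℝ), (Real.sqrt T)⁻¹ * T⁻¹ * Set.indicator (Set.Icc 0 T)
        (fun u => ∫ x in (0:ℝ)..u, x * Real.exp (-(2*γ.re)*x)) t)
      = (Real.sqrt T)⁻¹ * T⁻¹ *
          (T/(4*γ.re^2) + (T/(4*γ.re^2)+1/(4*γ.re^3)) * Real.exp (-(2*γ.re)*T)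
            - 1/(4*γ.re^3)) := by
    rw [MeasureTheory.integral_const_mul,
      MeasureTheory.setIntegral_indicator measurableSet_Icc, Ioi_inter_Icc',
      ← intervalIntegral.integral_of_le hT.le]
    congr 1
    rw [intervalIntegral.integral_congr (g := fun t : ℝ =>
        1/(4*γ.re^2) - (t/(2*γ.re)+1/(4*γ.re^2)) * Real.exp (-(2*γ.re)*t))
        (fun u _ => F_eval γ.re hl u)]
    exact J_eval γ.re hl T
  exact congrArg Complex.ofReal hre

/-- For `γ ∈ ℂ` with `Re γ > 0` there are constants `0 < c₁ ≤ c₂ < ∞` and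
`T₀ > 0`, depending only on `γ`, such that for all `T ≥ T₀`,
`c₁ T^{−1/2} ≤ |⟨ψ_T ⊗_{0,1} ψ_T, ψ_T⟩ + ⟨ψ_T ⊗_{1,0} ψ_T, ψ_T⟩| ≤ c₂ T^{−1/2}`. -/
theorem third_moment_bounds (γ : ℂ) (hγ : 0 < γ.re) :
    ∃ c₁ c₂ T₀ : ℝ, 0 < c₁ ∧ c₁ ≤ c₂ ∧ 0 < T₀ ∧ ∀ T, T₀ ≤ T →
      c₁ / Real.sqrt T
          ≤ ‖kerInner (contr01 (psiKer γ T) (psiKer γ T)) (psiKer γ T)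
              + kerInner (contr10 (psiKer γ T) (psiKer γ T)) (psiKer γ T)‖
        ∧ ‖kerInner (contr01 (psiKer γ T) (psiKer γ T)) (psiKer γ T)
              + kerInner (contr10 (psiKer γ T) (psiKer γ T)) (psiKer γ T)‖
          ≤ c₂ / Real.sqrt T := by
  refine ⟨1/(4*γ.re^2), 2/γ.re^2, 2/γ.re, by positivity, ?_, by positivity, ?_⟩
  · rw [div_le_div_iff₀ (by positivity) (by positivity)]
    nlinarith [sq_nonneg γ.re]
  · intro T hT0T
    have hT : 0 < T := lt_of_lt_of_le (by positivity) hT0T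
    have h2T : 2 ≤ T * γ.re := by
      rw [div_le_iff₀ hγ] at hT0T
      linarith
    set J : ℝ := T/(4*γ.re^2) + (T/(4*γ.re^2)+1/(4*γ.re^3)) * Real.exp (-(2*γ.re)*T)
      - 1/(4*γ.re^3) with hJdef
    have habs : kerInner (contr01 (psiKer γ T) (psiKer γ T)) (psiKer γ T)
        + kerInner (contr10 (psiKer γ T) (psiKer γ T)) (psiKer γ T)
        = ((2 * ((Real.sqrt T)⁻¹ * T⁻¹ * J) : ℝ) : ℂ) := by
      rw [contr10_eq, kerInner_eq γ hγ T hT, hJdef]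
      push_cast
      ring
    rw [habs, Complex.norm_real, Real.norm_eq_abs]
    have he1 : 0 < Real.exp (-(2*γ.re)*T) := Real.exp_pos _
    have he2 : Real.exp (-(2*γ.re)*T) ≤ 1 := Real.exp_le_one_iff.mpr (by nlinarith)
    have hs : 0 < Real.sqrt T := Real.sqrt_pos.2 hT
    have hkey : 1/(4*γ.re^3) ≤ T/(8*γ.re^2) := by
      rw [div_le_div_iff₀ (by positivity) (by positivity)]
      nlinarith [pow_pos hγ 2]
    have h48 : T/(8*γ.re^2) = (T/(4*γ.re^2))/2 := by ring
    have h4 : T/γ.re^2 = 4*(T/(4*γ.re^2)) := by ring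
    have hA : 0 ≤ T/(4*γ.re^2) := by positivity
    have hJlb : T/(8*γ.re^2) ≤ J := by
      rw [hJdef]
      have := mul_pos (by positivity : (0:ℝ) < T/(4*γ.re^2)+1/(4*γ.re^3)) he1
      linarith
    have hJub : J ≤ T/γ.re^2 := by
      rw [hJdef]
      have := mul_le_of_le_one_right (by positivity : (0:ℝ) ≤ T/(4*γ.re^2)+1/(4*γ.re^3)) he2
      linarith
    have hJpos : 0 < J := lt_of_lt_of_le (by positivity) hJlb
    rw [abs_of_nonneg (by positivity)]
    constructor
    · calc 1/(4*γ.re^2) / Real.sqrt T = 2 * ((Real.sqrt T)⁻¹ * T⁻¹ * (T/(8*γ.re^2))) := by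
            field_simp
            ring
        _ ≤ 2 * ((Real.sqrt T)⁻¹ * T⁻¹ * J) := by gcongr
    · calc 2 * ((Real.sqrt T)⁻¹ * T⁻¹ * J) ≤ 2 * ((Real.sqrt T)⁻¹ * T⁻¹ * (T/γ.re^2)) := by
            gcongr
        _ = 2/γ.re^2 / Real.sqrt T := by
            field_simp
end

section
/- Fix γ ∈ ℂ with Re γ > 0. There exist constants 0 < c₁ ≤ c₂ < ∞ and T₀ > 0, depending only on γ, such that for all T ≥ T₀: c₁·T^{−1} ≤ ‖ψ_T ⊗_{0,1} h_T‖² + ‖ψ_T ⊗_{1,0} h_T‖² ≤ c₂·T^{−1}. -/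
open MeasureTheory

/-- The squared `L²([0,∞)²)` norm `‖f‖² = ∫₀^∞ ∫₀^∞ |f(t; s)|² dt ds`. -/
noncomputable def kerNormSq (f : ℝ → ℝ → ℂ) : ℝ :=
  ∫ t in Set.Ioi (0 : ℝ), ∫ s in Set.Ioi (0 : ℝ), ‖f t s‖ ^ 2

open MeasureTheory Set

/-! ### The kernels and explicit contractions -/

open Complex in
noncomputable def F01 (γ : ℂ) (T t s : ℝ) : ℂ :=
  if 0 < t ∧ t ≤ T ∧ 0 < s ∧ s ≤ T then
    ((T⁻¹ : ℝ) : ℂ) * Complex.exp (-(starRingEnd ℂ γ) * t - γ * s) *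
      ((Complex.exp (((2 * γ.re : ℝ) : ℂ) * ((min t s : ℝ) : ℂ)) - 1) / ((2 * γ.re : ℝ) : ℂ))
  else 0

open Complex in
noncomputable def F10 (γ : ℂ) (T t s : ℝ) : ℂ :=
  if 0 < t ∧ t ≤ T ∧ 0 < s ∧ s ≤ T then
    ((T⁻¹ : ℝ) : ℂ) * Complex.exp ((starRingEnd ℂ γ) * s + γ * t) *
      ((Complex.exp (((-(2 * γ.re) : ℝ) : ℂ) * (T : ℂ))
        - Complex.exp (((-(2 * γ.re) : ℝ) : ℂ) * ((max t s : ℝ) : ℂ))) / ((-(2 * γ.re) : ℝ) : ℂ))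
  else 0



/-! ### 1-D exponential integral helpers -/

lemma intExpIoc {c : ℝ} (hc : c ≠ 0) {a b : ℝ} (hab : a ≤ b) :
    ∫ s in Set.Ioc a b, Real.exp (c * s) = (Real.exp (c * b) - Real.exp (c * a)) / c := by
  rw [← intervalIntegral.integral_of_le hab]
  have D : ∀ x : ℝ, HasDerivAt (fun y : ℝ => Real.exp (c * y) / c) (Real.exp (c * x)) x := by
    intro x
    have h1 : HasDerivAt (fun y : ℝ => c * y) c x := by simpa using (hasDerivAt_id x).const_mul c
    have h2 := (Real.hasDerivAt_exp (c * x)).comp x h1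
    have h3 := h2.div_const c
    simpa [mul_div_cancel_right₀ _ hc] using h3
  rw [intervalIntegral.integral_eq_sub_of_hasDerivAt (fun x _ => D x)
    ((Real.continuous_exp.comp (continuous_const.mul continuous_id)).intervalIntegrable a b)]
  ring

lemma intExpIoi {c : ℝ} (hc : 0 < c) (a : ℝ) :
    ∫ s in Set.Ioi a, Real.exp (-(c * s)) = Real.exp (-(c * a)) / c := by
  have h := integral_comp_mul_left_Ioi (fun x => Real.exp (-x)) a hc
  simp only [integral_exp_neg_Ioi] at h
  rw [show (∫ s in Set.Ioi a, Real.exp (-(c * s)))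
      = ∫ s in Set.Ioi a, (fun x => Real.exp (-x)) (c * s) from rfl, h, smul_eq_mul]
  ring

lemma integrableOn_expIoi {c : ℝ} (hc : 0 < c) (a : ℝ) :
    IntegrableOn (fun s => Real.exp (-(c * s))) (Set.Ioi a) := by
  have := exp_neg_integrableOn_Ioi a hc
  simpa [neg_mul] using this

lemma integrableOn_expAbs {l : ℝ} (hl : 0 < l) (t : ℝ) :
    IntegrableOn (fun s => Real.exp (-(2 * l * |t - s|))) (Set.Ioi (0:ℝ)) := by
  set M := max 0 t with hM
  have hcont : Continuous fun s : ℝ => Real.exp (-(2 * l * |t - s|)) :=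
    Real.continuous_exp.comp ((continuous_const.mul (continuous_const.sub continuous_id).abs).neg)
  have h1 : IntegrableOn (fun s => Real.exp (-(2 * l * |t - s|))) (Set.Ioc (0:ℝ) M) :=
    hcont.integrableOn_Ioc
  have h2 : IntegrableOn (fun s => Real.exp (-(2 * l * |t - s|))) (Set.Ioi M) := by
    have base : IntegrableOn (fun s => Real.exp (2 * l * t) * Real.exp (-(2 * l * s)))
        (Set.Ioi M) := (integrableOn_expIoi (by positivity) M).const_mul _
    refine base.congr_fun (fun s hs => ?_) measurableSet_Ioi
    have hts : t ≤ s := le_of_lt (lt_of_le_of_lt (le_max_right 0 t) hs)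
    beta_reduce
    rw [← Real.exp_add, abs_of_nonpos (by linarith)]
    ring_nf
  refine (h1.union h2).mono_set ?_
  rw [Set.Ioc_union_Ioi_eq_Ioi (le_max_left 0 t)]

lemma integral_expAbs_le {l : ℝ} (hl : 0 < l) (t : ℝ) :
    ∫ s in Set.Ioi (0:ℝ), Real.exp (-(2 * l * |t - s|)) ≤ 1 / l := by
  set M := max 0 t with hM
  have hcont : Continuous fun s : ℝ => Real.exp (-(2 * l * |t - s|)) :=
    Real.continuous_exp.comp ((continuous_const.mul (continuous_const.sub continuous_id).abs).neg)
  have h1 : IntegrableOn (fun s => Real.exp (-(2 * l * |t - s|))) (Set.Ioc (0:ℝ) M) :=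
    hcont.integrableOn_Ioc
  have h2 : IntegrableOn (fun s => Real.exp (-(2 * l * |t - s|))) (Set.Ioi M) :=
    (integrableOn_expAbs hl t).mono_set (Set.Ioi_subset_Ioi (le_max_left 0 t))
  rw [show Set.Ioi (0:ℝ) = Set.Ioc 0 M ∪ Set.Ioi M from
    (Set.Ioc_union_Ioi_eq_Ioi (le_max_left 0 t)).symm,
    setIntegral_union Set.Ioc_disjoint_Ioi_same measurableSet_Ioi h1 h2]
  have partA : ∫ s in Set.Ioc (0:ℝ) M, Real.exp (-(2 * l * |t - s|)) ≤ 1 / (2 * l) := by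
    rcases le_or_gt t 0 with ht | ht
    · have hM0 : M = 0 := max_eq_left ht
      rw [hM0, Set.Ioc_self, Measure.restrict_empty, integral_zero_measure]
      positivity
    · have hMt : M = t := max_eq_right ht.le
      rw [hMt]
      have heq : ∀ s ∈ Set.Ioc (0:ℝ) t,
          Real.exp (-(2 * l * |t - s|)) = Real.exp (-(2 * l * t)) * Real.exp (2 * l * s) := by
        intro s hs
        rw [← Real.exp_add, abs_of_nonneg (by linarith [hs.2])]
        ring_nf
      rw [setIntegral_congr_fun measurableSet_Ioc heq, integral_const_mul,
        intExpIoc (by positivity : (2*l : ℝ) ≠ 0) ht.le]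
      have e2 : 0 < Real.exp (-(2 * l * t)) * Real.exp (2 * l * 0) := by positivity
      calc Real.exp (-(2*l*t)) * ((Real.exp (2*l*t) - Real.exp (2*l*0))/(2*l))
          = (Real.exp (-(2*l*t) + 2*l*t) - Real.exp (-(2*l*t)) * Real.exp (2*l*0)) / (2*l) := by
            rw [Real.exp_add]; ring
        _ ≤ 1 / (2*l) := by
            have e1 : Real.exp (-(2 * l * t) + 2 * l * t) = 1 := by
              rw [show -(2*l*t) + 2*l*t = 0 by ring, Real.exp_zero]
            rw [e1]
            gcongr
            linarith
  have partB : ∫ s in Set.Ioi M, Real.exp (-(2 * l * |t - s|)) ≤ 1 / (2 * l) := by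
    have heq : ∀ s ∈ Set.Ioi M,
        Real.exp (-(2 * l * |t - s|)) = Real.exp (2 * l * t) * Real.exp (-(2 * l * s)) := by
      intro s hs
      have hts : t ≤ s := le_of_lt (lt_of_le_of_lt (le_max_right 0 t) hs)
      rw [← Real.exp_add, abs_of_nonpos (by linarith)]
      ring_nf
    rw [setIntegral_congr_fun measurableSet_Ioi heq, integral_const_mul,
      intExpIoi (by positivity : (0:ℝ) < 2*l) M]
    have hrw : Real.exp (2*l*t) * (Real.exp (-(2*l*M))/(2*l))
        = Real.exp (2*l*t + -(2*l*M)) / (2*l) := by rw [Real.exp_add]; ring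
    rw [hrw]
    have hle : Real.exp (2*l*t + -(2*l*M)) ≤ 1 := by
      rw [← Real.exp_zero]
      apply Real.exp_le_exp.mpr
      have : t ≤ M := le_max_right 0 t
      nlinarith
    gcongr
  have hsum : (1:ℝ)/(2*l) + 1/(2*l) = 1/l := by field_simp; norm_num
  linarith

lemma sqrtT_sq {T : ℝ} (hT : 0 < T) :
    (((Real.sqrt T)⁻¹ : ℝ) : ℂ) * (((Real.sqrt T)⁻¹ : ℝ) : ℂ) = ((T⁻¹ : ℝ) : ℂ) := by
  rw [← Complex.ofReal_mul, ← mul_inv, Real.mul_self_sqrt hT.le]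

lemma contr01_eq' (γ : ℂ) {T : ℝ} (hl : 0 < γ.re) (hT : 0 < T) {t s : ℝ}
    (ht : 0 < t) (hs : 0 < s) :
    contr01 (psiKer γ T) (hKer γ T) t s = F01 γ T t s := by
  by_cases hc : t ≤ T ∧ s ≤ T
  · set m := min t s with hm
    set c : ℂ := ((2 * γ.re : ℝ) : ℂ) with hcdef
    set C : ℂ := ((T⁻¹ : ℝ) : ℂ) * Complex.exp (-(starRingEnd ℂ γ) * t - γ * s) with hCdef
    have hcne : c ≠ 0 := by
      rw [hcdef]
      exact Complex.ofReal_ne_zero.mpr (by positivity)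
    have key : ∀ v : ℝ, psiKer γ T t v * hKer γ T v s
        = Set.indicator (Set.Icc 0 m) (fun v : ℝ => C * Complex.exp (c * v)) v := by
      intro v
      by_cases hv : v ∈ Set.Icc 0 m
      · rw [Set.indicator_of_mem hv]
        obtain ⟨hv0, hvm⟩ := hv
        have hvt : v ≤ t := le_trans hvm (min_le_left t s)
        have hvs : v ≤ s := le_trans hvm (min_le_right t s)
        simp only [psiKer, hKer]
        rw [if_pos ⟨hv0, hvt, hc.1⟩, if_pos ⟨hv0, hvs, hc.2⟩, mul_one, mul_one,
          mul_mul_mul_comm, sqrtT_sq hT, hCdef, mul_assoc, ← Complex.exp_add,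
          ← Complex.exp_add]
        congr 2
        have hcc : c = γ + (starRingEnd ℂ) γ := by rw [hcdef, Complex.add_conj]
        rw [hcc]
        ring
      · rw [Set.indicator_of_notMem hv]
        simp only [Set.mem_Icc, not_and_or, not_le] at hv
        rcases hv with hv0 | hvm
        · simp only [psiKer]
          rw [if_neg (fun h => absurd h.1 (not_le.mpr hv0))]
          simp
        · rcases min_lt_iff.mp hvm with h | h
          · simp only [psiKer]
            rw [if_neg (fun hx => absurd hx.2.1 (not_le.mpr h))]
            simp
          · simp only [hKer]
            rw [if_neg (fun hx => absurd hx.2.1 (not_le.mpr h))]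
            simp
    have hm0 : (0:ℝ) ≤ m := le_min ht.le hs.le
    have hIccIoi : Set.Icc (0:ℝ) m ∩ Set.Ioi 0 = Set.Ioc 0 m :=
      Set.ext fun x => ⟨fun ⟨⟨_, h2⟩, h3⟩ => ⟨h3, h2⟩, fun ⟨h1, h2⟩ => ⟨⟨h1.le, h2⟩, h1⟩⟩
    simp only [contr01]
    simp only [key]
    rw [integral_indicator measurableSet_Icc, Measure.restrict_restrict measurableSet_Icc,
      hIccIoi, ← intervalIntegral.integral_of_le hm0, intervalIntegral.integral_const_mul,
      integral_exp_mul_complex hcne]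
    rw [F01, if_pos ⟨ht, hc.1, hs, hc.2⟩]
    rw [hCdef, hcdef, Complex.ofReal_zero, mul_zero, Complex.exp_zero]
  · have key0 : ∀ v : ℝ, psiKer γ T t v * hKer γ T v s = 0 := by
      intro v
      rcases not_and_or.mp hc with h | h
      · simp only [psiKer]
        rw [if_neg (fun hx => h hx.2.2)]
        simp
      · simp only [hKer]
        rw [if_neg (fun hx => h hx.2.2)]
        simp
    simp only [contr01, key0, integral_zero]
    rw [F01, if_neg (by tauto)]

lemma contr10_eq' (γ : ℂ) {T : ℝ} (hl : 0 < γ.re) (hT : 0 < T) {t s : ℝ}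
    (ht : 0 < t) (hs : 0 < s) :
    contr10 (psiKer γ T) (hKer γ T) t s = F10 γ T t s := by
  set M := max t s with hM
  set c : ℂ := ((-(2 * γ.re) : ℝ) : ℂ) with hcdef
  set C : ℂ := ((T⁻¹ : ℝ) : ℂ) * Complex.exp ((starRingEnd ℂ γ) * s + γ * t) with hCdef
  have hcne : c ≠ 0 := by
    rw [hcdef]
    refine Complex.ofReal_ne_zero.mpr ?_
    have : (0:ℝ) < 2 * γ.re := by positivity
    linarith
  have key : ∀ u : ℝ, psiKer γ T u s * hKer γ T t u
      = Set.indicator (Set.Icc M T) (fun u : ℝ => C * Complex.exp (c * u)) u := by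
    intro u
    by_cases hu : u ∈ Set.Icc M T
    · rw [Set.indicator_of_mem hu]
      obtain ⟨hu1, hu2⟩ := hu
      have hsu : s ≤ u := le_trans (le_max_right t s) hu1
      have htu : t ≤ u := le_trans (le_max_left t s) hu1
      simp only [psiKer, hKer]
      rw [if_pos ⟨hs.le, hsu, hu2⟩, if_pos ⟨ht.le, htu, hu2⟩, mul_one, mul_one,
        mul_mul_mul_comm, sqrtT_sq hT, hCdef, mul_assoc, ← Complex.exp_add,
        ← Complex.exp_add]
      congr 2
      have hcc : c = -(γ + (starRingEnd ℂ) γ) := by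
        rw [hcdef, Complex.add_conj]
        push_cast
        ring
      rw [hcc]
      ring
    · rw [Set.indicator_of_notMem hu]
      simp only [Set.mem_Icc, not_and_or, not_le] at hu
      rcases hu with hu1 | hu2
      · rcases lt_max_iff.mp hu1 with h1 | h1
        · simp only [hKer]
          rw [if_neg (fun hx => absurd hx.2.1 (not_le.mpr h1))]
          simp
        · simp only [psiKer]
          rw [if_neg (fun hx => absurd hx.2.1 (not_le.mpr h1))]
          simp
      · simp only [psiKer]
        rw [if_neg (fun hx => absurd hx.2.2 (not_le.mpr hu2))]
        simp
  have hMpos : 0 < M := lt_of_lt_of_le ht (le_max_left t s)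
  have hsub : Set.Icc M T ∩ Set.Ioi 0 = Set.Icc M T :=
    Set.inter_eq_self_of_subset_left (fun x hx => lt_of_lt_of_le hMpos hx.1)
  simp only [contr10]
  simp only [key]
  rw [integral_indicator measurableSet_Icc, Measure.restrict_restrict measurableSet_Icc, hsub]
  by_cases hc : t ≤ T ∧ s ≤ T
  · rw [integral_Icc_eq_integral_Ioc,
      ← intervalIntegral.integral_of_le (max_le hc.1 hc.2 : M ≤ T),
      intervalIntegral.integral_const_mul, integral_exp_mul_complex hcne]
    rw [F10, if_pos ⟨ht, hc.1, hs, hc.2⟩, hCdef, hcdef]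
  · have hTM : T < M := by
      rcases not_and_or.mp hc with h | h
      · exact lt_of_lt_of_le (not_le.mp h) (le_max_left t s)
      · exact lt_of_lt_of_le (not_le.mp h) (le_max_right t s)
    rw [Set.Icc_eq_empty (not_le.mpr hTM), Measure.restrict_empty, integral_zero_measure,
      F10, if_neg (by tauto)]

/-! ### Modulus formulas -/

lemma two_min_sub (t s : ℝ) : 2 * min t s - t - s = -|t - s| := by
  rcases le_total t s with h | h
  · rw [min_eq_left h, abs_of_nonpos (by linarith : t - s ≤ 0)]; ring
  · rw [min_eq_right h, abs_of_nonneg (by linarith : 0 ≤ t - s)]; ring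

lemma two_max_sub (t s : ℝ) : 2 * max t s - t - s = |t - s| := by
  rcases le_total t s with h | h
  · rw [max_eq_right h, abs_of_nonpos (by linarith : t - s ≤ 0)]; ring
  · rw [max_eq_left h, abs_of_nonneg (by linarith : 0 ≤ t - s)]; ring

lemma abs_F01 {γ : ℂ} {T : ℝ} (hl : 0 < γ.re) (hT : 0 < T) {t s : ℝ}
    (h : 0 < t ∧ t ≤ T ∧ 0 < s ∧ s ≤ T) :
    ‖F01 γ T t s‖
      = T⁻¹ * ((Real.exp (-(γ.re * |t - s|)) - Real.exp (-(γ.re * (t + s)))) / (2 * γ.re)) := by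
  obtain ⟨ht, h1, hs, h2⟩ := h
  rw [F01, if_pos ⟨ht, h1, hs, h2⟩]
  have hm : (0:ℝ) ≤ min t s := le_min ht.le hs.le
  have hc1 : (((2 * γ.re : ℝ) : ℂ) * ((min t s : ℝ) : ℂ)) = ((2 * γ.re * min t s : ℝ) : ℂ) := by
    push_cast; ring
  rw [hc1, ← Complex.ofReal_exp,
    show (((Real.exp (2 * γ.re * min t s) : ℝ)) : ℂ) - 1
        = ((Real.exp (2 * γ.re * min t s) - 1 : ℝ) : ℂ) by push_cast; ring]
  rw [norm_mul, norm_mul, norm_div, Complex.norm_real, Complex.norm_real,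
    Complex.norm_real, Complex.norm_exp, Real.norm_eq_abs, Real.norm_eq_abs, Real.norm_eq_abs]
  have hre : (-(starRingEnd ℂ γ) * (t:ℂ) - γ * (s:ℂ)).re = -(γ.re * (t + s)) := by
    simp [Complex.sub_re, Complex.neg_re, Complex.mul_re, Complex.conj_re, Complex.conj_im,
      Complex.ofReal_re, Complex.ofReal_im]
    ring
  rw [hre, abs_of_pos (inv_pos.mpr hT),
    abs_of_nonneg (sub_nonneg.mpr (by
      have := Real.add_one_le_exp (2 * γ.re * min t s)
      nlinarith)),
    abs_of_pos (by positivity : (0:ℝ) < 2 * γ.re)]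
  have hkey : Real.exp (2 * γ.re * min t s) * Real.exp (-(γ.re * (t + s)))
      = Real.exp (-(γ.re * |t - s|)) := by
    rw [← Real.exp_add]
    congr 1
    have := two_min_sub t s
    nlinarith [this]
  linear_combination (T⁻¹ / (2 * γ.re)) * hkey

lemma abs_F10 {γ : ℂ} {T : ℝ} (hl : 0 < γ.re) (hT : 0 < T) {t s : ℝ}
    (h : 0 < t ∧ t ≤ T ∧ 0 < s ∧ s ≤ T) :
    ‖F10 γ T t s‖
      = T⁻¹ * ((Real.exp (-(γ.re * |t - s|)) - Real.exp (-(γ.re * (2 * T - t - s)))) / (2 * γ.re)) := by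
  obtain ⟨ht, h1, hs, h2⟩ := h
  rw [F10, if_pos ⟨ht, h1, hs, h2⟩]
  have hMT : max t s ≤ T := max_le h1 h2
  have hc1 : (((-(2 * γ.re) : ℝ) : ℂ) * ((T : ℝ) : ℂ)) = ((-(2 * γ.re) * T : ℝ) : ℂ) := by
    push_cast; ring
  have hc2 : (((-(2 * γ.re) : ℝ) : ℂ) * ((max t s : ℝ) : ℂ))
      = ((-(2 * γ.re) * max t s : ℝ) : ℂ) := by push_cast; ring
  rw [hc1, hc2, ← Complex.ofReal_exp, ← Complex.ofReal_exp, ← Complex.ofReal_sub]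
  rw [norm_mul, norm_mul, norm_div, Complex.norm_real, Complex.norm_real,
    Complex.norm_real, Complex.norm_exp, Real.norm_eq_abs, Real.norm_eq_abs, Real.norm_eq_abs]
  have hre : ((starRingEnd ℂ γ) * (s:ℂ) + γ * (t:ℂ)).re = γ.re * (t + s) := by
    simp [Complex.add_re, Complex.mul_re, Complex.conj_re, Complex.conj_im,
      Complex.ofReal_re, Complex.ofReal_im]
    ring
  rw [hre, abs_of_pos (inv_pos.mpr hT)]
  have hd : Real.exp (-(2 * γ.re) * T) - Real.exp (-(2 * γ.re) * max t s) ≤ 0 := by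
    have : -(2 * γ.re) * T ≤ -(2 * γ.re) * max t s := by nlinarith
    have := Real.exp_le_exp.mpr this
    linarith
  rw [abs_of_nonpos hd, abs_of_neg (by linarith : (-(2 * γ.re) : ℝ) < 0)]
  have hkey1 : Real.exp (-(2 * γ.re) * max t s) * Real.exp (γ.re * (t + s))
      = Real.exp (-(γ.re * |t - s|)) := by
    rw [← Real.exp_add]
    congr 1
    have := two_max_sub t s
    nlinarith [this]
  have hkey2 : Real.exp (-(2 * γ.re) * T) * Real.exp (γ.re * (t + s))
      = Real.exp (-(γ.re * (2 * T - t - s))) := by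
    rw [← Real.exp_add]
    congr 1
    ring
  linear_combination (T⁻¹ / (2 * γ.re)) * hkey1 - (T⁻¹ / (2 * γ.re)) * hkey2

/-! ### Pointwise bounds -/

lemma sq_abs_F01_le {γ : ℂ} {T : ℝ} (hl : 0 < γ.re) (hT : 0 < T) (t s : ℝ) :
    ‖F01 γ T t s‖ ^ 2
      ≤ (T ^ 2)⁻¹ / (4 * γ.re ^ 2) * Real.exp (-(2 * γ.re * |t - s|)) := by
  by_cases h : 0 < t ∧ t ≤ T ∧ 0 < s ∧ s ≤ T
  · rw [abs_F01 hl hT h]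
    set l := γ.re with hldef
    set A := Real.exp (-(l * |t - s|)) with hA
    set B := Real.exp (-(l * (t + s))) with hB
    have hApos : 0 < A := Real.exp_pos _
    have hBpos : 0 < B := Real.exp_pos _
    have h0 : 0 ≤ A - B := by
      have habs : |t - s| ≤ t + s := abs_le.mpr ⟨by nlinarith [h.1, h.2.2.1], by nlinarith [h.1, h.2.2.1]⟩
      have : -(l * (t + s)) ≤ -(l * |t - s|) := by nlinarith
      have := Real.exp_le_exp.mpr this
      rw [← hA, ← hB] at this
      linarith
    have hstep : T⁻¹ * ((A - B) / (2 * l)) ≤ T⁻¹ * (A / (2 * l)) := by gcongr; linarith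
    have hpos : 0 ≤ T⁻¹ * ((A - B) / (2 * l)) := by positivity
    calc (T⁻¹ * ((A - B) / (2 * l))) ^ 2 ≤ (T⁻¹ * (A / (2 * l))) ^ 2 :=
          pow_le_pow_left₀ hpos hstep 2
      _ = (T ^ 2)⁻¹ / (4 * l ^ 2) * A ^ 2 := by ring
      _ = (T ^ 2)⁻¹ / (4 * l ^ 2) * Real.exp (-(2 * l * |t - s|)) := by
          congr 1
          rw [hA, sq, ← Real.exp_add]
          congr 1
          ring
  · rw [F01, if_neg h]
    simp only [norm_zero]
    norm_num
    positivity

lemma sq_abs_F10_le {γ : ℂ} {T : ℝ} (hl : 0 < γ.re) (hT : 0 < T) (t s : ℝ) :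
    ‖F10 γ T t s‖ ^ 2
      ≤ (T ^ 2)⁻¹ / (4 * γ.re ^ 2) * Real.exp (-(2 * γ.re * |t - s|)) := by
  by_cases h : 0 < t ∧ t ≤ T ∧ 0 < s ∧ s ≤ T
  · rw [abs_F10 hl hT h]
    set l := γ.re with hldef
    set A := Real.exp (-(l * |t - s|)) with hA
    set B := Real.exp (-(l * (2 * T - t - s))) with hB
    have hApos : 0 < A := Real.exp_pos _
    have hBpos : 0 < B := Real.exp_pos _
    have h0 : 0 ≤ A - B := by
      have habs : |t - s| ≤ 2 * T - t - s := by
        refine abs_le.mpr ⟨by nlinarith [h.2.1, h.2.2.2], by nlinarith [h.2.1, h.2.2.2]⟩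
      have : -(l * (2 * T - t - s)) ≤ -(l * |t - s|) := by nlinarith
      have := Real.exp_le_exp.mpr this
      rw [← hA, ← hB] at this
      linarith
    have hstep : T⁻¹ * ((A - B) / (2 * l)) ≤ T⁻¹ * (A / (2 * l)) := by gcongr; linarith
    have hpos : 0 ≤ T⁻¹ * ((A - B) / (2 * l)) := by positivity
    calc (T⁻¹ * ((A - B) / (2 * l))) ^ 2 ≤ (T⁻¹ * (A / (2 * l))) ^ 2 :=
          pow_le_pow_left₀ hpos hstep 2
      _ = (T ^ 2)⁻¹ / (4 * l ^ 2) * A ^ 2 := by ring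
      _ = (T ^ 2)⁻¹ / (4 * l ^ 2) * Real.exp (-(2 * l * |t - s|)) := by
          congr 1
          rw [hA, sq, ← Real.exp_add]
          congr 1
          ring
  · rw [F10, if_neg h]
    simp only [norm_zero]
    norm_num
    positivity

/-! ### Measurability -/

lemma measurable_F01 (γ : ℂ) (T : ℝ) : Measurable (fun p : ℝ × ℝ => F01 γ T p.1 p.2) := by
  unfold F01
  apply Measurable.ite
  · have : {p : ℝ × ℝ | 0 < p.1 ∧ p.1 ≤ T ∧ 0 < p.2 ∧ p.2 ≤ T}
        = ({p : ℝ × ℝ | 0 < p.1} ∩ {p | p.1 ≤ T} ∩ ({p | 0 < p.2} ∩ {p | p.2 ≤ T})) := by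
      ext p; simp [Set.mem_setOf_eq, and_assoc]
    rw [this]
    exact (((measurableSet_lt measurable_const measurable_fst).inter
      (measurableSet_le measurable_fst measurable_const)).inter
      ((measurableSet_lt measurable_const measurable_snd).inter
      (measurableSet_le measurable_snd measurable_const)))
  · have hcont : Continuous fun p : ℝ × ℝ =>
        ((T⁻¹ : ℝ) : ℂ) * Complex.exp (-(starRingEnd ℂ γ) * p.1 - γ * p.2) *
          ((Complex.exp (((2 * γ.re : ℝ) : ℂ) * ((min p.1 p.2 : ℝ) : ℂ)) - 1)
            / ((2 * γ.re : ℝ) : ℂ)) := by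
      apply Continuous.mul
      · exact continuous_const.mul (Complex.continuous_exp.comp (by fun_prop))
      · exact ((Complex.continuous_exp.comp (by fun_prop)).sub continuous_const).div_const _
    exact hcont.measurable
  · exact measurable_const

lemma measurable_F10 (γ : ℂ) (T : ℝ) : Measurable (fun p : ℝ × ℝ => F10 γ T p.1 p.2) := by
  unfold F10
  apply Measurable.ite
  · have : {p : ℝ × ℝ | 0 < p.1 ∧ p.1 ≤ T ∧ 0 < p.2 ∧ p.2 ≤ T}
        = ({p : ℝ × ℝ | 0 < p.1} ∩ {p | p.1 ≤ T} ∩ ({p | 0 < p.2} ∩ {p | p.2 ≤ T})) := by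
      ext p; simp [Set.mem_setOf_eq, and_assoc]
    rw [this]
    exact (((measurableSet_lt measurable_const measurable_fst).inter
      (measurableSet_le measurable_fst measurable_const)).inter
      ((measurableSet_lt measurable_const measurable_snd).inter
      (measurableSet_le measurable_snd measurable_const)))
  · have hcont : Continuous fun p : ℝ × ℝ =>
        ((T⁻¹ : ℝ) : ℂ) * Complex.exp ((starRingEnd ℂ γ) * p.2 + γ * p.1) *
          ((Complex.exp (((-(2 * γ.re) : ℝ) : ℂ) * (T : ℂ))
            - Complex.exp (((-(2 * γ.re) : ℝ) : ℂ) * ((max p.1 p.2 : ℝ) : ℂ)))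
            / ((-(2 * γ.re) : ℝ) : ℂ)) := by
      apply Continuous.mul
      · exact continuous_const.mul (Complex.continuous_exp.comp (by fun_prop))
      · exact (continuous_const.sub (Complex.continuous_exp.comp (by fun_prop))).div_const _
    exact hcont.measurable
  · exact measurable_const

lemma measurable_sq01 (γ : ℂ) (T : ℝ) :
    Measurable (fun p : ℝ × ℝ => ‖F01 γ T p.1 p.2‖ ^ 2) := by
  have h := (measurable_F01 γ T).norm.pow_const 2
  simpa using h

lemma measurable_sq10 (γ : ℂ) (T : ℝ) :
    Measurable (fun p : ℝ × ℝ => ‖F10 γ T p.1 p.2‖ ^ 2) := by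
  have h := (measurable_F10 γ T).norm.pow_const 2
  simpa using h

/-! ### The inner integrals -/

noncomputable def I01 (γ : ℂ) (T t : ℝ) : ℝ :=
  ∫ s in Set.Ioi (0:ℝ), ‖F01 γ T t s‖ ^ 2

noncomputable def I10 (γ : ℂ) (T t : ℝ) : ℝ :=
  ∫ s in Set.Ioi (0:ℝ), ‖F10 γ T t s‖ ^ 2

lemma integrableOn_Ub {γ : ℂ} {T : ℝ} (hl : 0 < γ.re) (t : ℝ) :
    IntegrableOn (fun s : ℝ => (T ^ 2)⁻¹ / (4 * γ.re ^ 2) * Real.exp (-(2 * γ.re * |t - s|)))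
      (Set.Ioi (0:ℝ)) :=
  (integrableOn_expAbs hl t).const_mul _

lemma integral_Ub_le {γ : ℂ} {T : ℝ} (hl : 0 < γ.re) (t : ℝ) :
    ∫ s in Set.Ioi (0:ℝ), (T ^ 2)⁻¹ / (4 * γ.re ^ 2) * Real.exp (-(2 * γ.re * |t - s|))
      ≤ (T ^ 2)⁻¹ / (4 * γ.re ^ 3) := by
  rw [integral_const_mul]
  have h1 := integral_expAbs_le hl t
  have h2 : (0:ℝ) ≤ (T ^ 2)⁻¹ / (4 * γ.re ^ 2) := by positivity
  calc (T ^ 2)⁻¹ / (4 * γ.re ^ 2) * ∫ s in Set.Ioi (0:ℝ), Real.exp (-(2 * γ.re * |t - s|))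
      ≤ (T ^ 2)⁻¹ / (4 * γ.re ^ 2) * (1 / γ.re) := mul_le_mul_of_nonneg_left h1 h2
    _ = (T ^ 2)⁻¹ / (4 * γ.re ^ 3) := by
        field_simp

lemma integrableOn_sq01 {γ : ℂ} {T : ℝ} (hl : 0 < γ.re) (hT : 0 < T) (t : ℝ) :
    IntegrableOn (fun s : ℝ => ‖F01 γ T t s‖ ^ 2) (Set.Ioi (0:ℝ)) := by
  refine Integrable.mono' (integrableOn_Ub (T := T) hl t) ?_ ?_
  · exact ((measurable_sq01 γ T).comp measurable_prodMk_left).aestronglyMeasurable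
  · refine Filter.Eventually.of_forall fun s => ?_
    rw [Real.norm_eq_abs, abs_of_nonneg (by positivity)]
    exact sq_abs_F01_le hl hT t s

lemma integrableOn_sq10 {γ : ℂ} {T : ℝ} (hl : 0 < γ.re) (hT : 0 < T) (t : ℝ) :
    IntegrableOn (fun s : ℝ => ‖F10 γ T t s‖ ^ 2) (Set.Ioi (0:ℝ)) := by
  refine Integrable.mono' (integrableOn_Ub (T := T) hl t) ?_ ?_
  · exact ((measurable_sq10 γ T).comp measurable_prodMk_left).aestronglyMeasurable
  · refine Filter.Eventually.of_forall fun s => ?_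
    rw [Real.norm_eq_abs, abs_of_nonneg (by positivity)]
    exact sq_abs_F10_le hl hT t s

lemma I01_nonneg (γ : ℂ) (T t : ℝ) : 0 ≤ I01 γ T t :=
  integral_nonneg fun s => by positivity

lemma I10_nonneg (γ : ℂ) (T t : ℝ) : 0 ≤ I10 γ T t :=
  integral_nonneg fun s => by positivity

lemma I01_le {γ : ℂ} {T : ℝ} (hl : 0 < γ.re) (hT : 0 < T) (t : ℝ) :
    I01 γ T t ≤ (T ^ 2)⁻¹ / (4 * γ.re ^ 3) := by
  refine le_trans (integral_mono_of_nonneg (Filter.Eventually.of_forall fun s => by positivity)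
    (integrableOn_Ub hl t) (Filter.Eventually.of_forall fun s => sq_abs_F01_le hl hT t s)) ?_
  exact integral_Ub_le hl t

lemma I10_le {γ : ℂ} {T : ℝ} (hl : 0 < γ.re) (hT : 0 < T) (t : ℝ) :
    I10 γ T t ≤ (T ^ 2)⁻¹ / (4 * γ.re ^ 3) := by
  refine le_trans (integral_mono_of_nonneg (Filter.Eventually.of_forall fun s => by positivity)
    (integrableOn_Ub hl t) (Filter.Eventually.of_forall fun s => sq_abs_F10_le hl hT t s)) ?_
  exact integral_Ub_le hl t

lemma I01_zero {γ : ℂ} {T : ℝ} (t : ℝ) (hTt : T < t) : I01 γ T t = 0 := by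
  unfold I01
  have h : ∀ s : ℝ, F01 γ T t s = 0 := fun s => by
    rw [F01, if_neg (by rintro ⟨_, h, _⟩; linarith)]
  simp [h]

lemma I10_zero {γ : ℂ} {T : ℝ} (t : ℝ) (hTt : T < t) : I10 γ T t = 0 := by
  unfold I10
  have h : ∀ s : ℝ, F10 γ T t s = 0 := fun s => by
    rw [F10, if_neg (by rintro ⟨_, h, _⟩; linarith)]
  simp [h]

lemma stronglyMeasurable_I01 (γ : ℂ) (T : ℝ) : MeasureTheory.StronglyMeasurable (I01 γ T) :=
  (measurable_sq01 γ T).stronglyMeasurable.integral_prod_right'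

lemma stronglyMeasurable_I10 (γ : ℂ) (T : ℝ) : MeasureTheory.StronglyMeasurable (I10 γ T) :=
  (measurable_sq10 γ T).stronglyMeasurable.integral_prod_right'

lemma integrable_V {T : ℝ} (hT : 0 < T) (K : ℝ) :
    MeasureTheory.Integrable (Set.indicator (Set.Ioc (0:ℝ) T) (fun _ => K))
      (MeasureTheory.volume.restrict (Set.Ioi (0:ℝ))) := by
  rw [integrable_indicator_iff measurableSet_Ioc]
  refine integrableOn_const (ne_of_lt ?_)
  calc (MeasureTheory.volume.restrict (Set.Ioi (0:ℝ))) (Set.Ioc 0 T)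
      ≤ MeasureTheory.volume (Set.Ioc (0:ℝ) T) := Measure.restrict_apply_le _ _
    _ < ⊤ := measure_Ioc_lt_top

lemma integral_V {T : ℝ} (hT : 0 < T) (K : ℝ) :
    ∫ t in Set.Ioi (0:ℝ), Set.indicator (Set.Ioc (0:ℝ) T) (fun _ => K) t = K * T := by
  rw [integral_indicator measurableSet_Ioc, Measure.restrict_restrict measurableSet_Ioc,
    Set.inter_eq_self_of_subset_left Set.Ioc_subset_Ioi_self, setIntegral_const, smul_eq_mul,
    Real.volume_real_Ioc, max_eq_left (by linarith)]
  ring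

lemma bound_I01 {γ : ℂ} {T : ℝ} (hl : 0 < γ.re) (hT : 0 < T) :
    ∀ t ∈ Set.Ioi (0:ℝ), I01 γ T t
      ≤ Set.indicator (Set.Ioc (0:ℝ) T) (fun _ => (T ^ 2)⁻¹ / (4 * γ.re ^ 3)) t := by
  intro t ht
  by_cases htT : t ≤ T
  · rw [Set.indicator_of_mem (show t ∈ Set.Ioc (0:ℝ) T from ⟨ht, htT⟩)]
    exact I01_le hl hT t
  · rw [Set.indicator_of_notMem (fun hx => htT hx.2), I01_zero t (not_le.mp htT)]

lemma bound_I10 {γ : ℂ} {T : ℝ} (hl : 0 < γ.re) (hT : 0 < T) :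
    ∀ t ∈ Set.Ioi (0:ℝ), I10 γ T t
      ≤ Set.indicator (Set.Ioc (0:ℝ) T) (fun _ => (T ^ 2)⁻¹ / (4 * γ.re ^ 3)) t := by
  intro t ht
  by_cases htT : t ≤ T
  · rw [Set.indicator_of_mem (show t ∈ Set.Ioc (0:ℝ) T from ⟨ht, htT⟩)]
    exact I10_le hl hT t
  · rw [Set.indicator_of_notMem (fun hx => htT hx.2), I10_zero t (not_le.mp htT)]

lemma integrableOn_I01 {γ : ℂ} {T : ℝ} (hl : 0 < γ.re) (hT : 0 < T) :
    IntegrableOn (I01 γ T) (Set.Ioi (0:ℝ)) := by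
  refine Integrable.mono' (integrable_V hT ((T ^ 2)⁻¹ / (4 * γ.re ^ 3)))
    (stronglyMeasurable_I01 γ T).aestronglyMeasurable ?_
  rw [MeasureTheory.ae_restrict_iff' measurableSet_Ioi]
  refine Filter.Eventually.of_forall fun t ht => ?_
  rw [Real.norm_eq_abs, abs_of_nonneg (I01_nonneg γ T t)]
  exact bound_I01 hl hT t ht

lemma integrableOn_I10 {γ : ℂ} {T : ℝ} (hl : 0 < γ.re) (hT : 0 < T) :
    IntegrableOn (I10 γ T) (Set.Ioi (0:ℝ)) := by
  refine Integrable.mono' (integrable_V hT ((T ^ 2)⁻¹ / (4 * γ.re ^ 3)))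
    (stronglyMeasurable_I10 γ T).aestronglyMeasurable ?_
  rw [MeasureTheory.ae_restrict_iff' measurableSet_Ioi]
  refine Filter.Eventually.of_forall fun t ht => ?_
  rw [Real.norm_eq_abs, abs_of_nonneg (I10_nonneg γ T t)]
  exact bound_I10 hl hT t ht

lemma integral_I01_le {γ : ℂ} {T : ℝ} (hl : 0 < γ.re) (hT : 0 < T) :
    ∫ t in Set.Ioi (0:ℝ), I01 γ T t ≤ (T ^ 2)⁻¹ / (4 * γ.re ^ 3) * T := by
  refine le_trans (integral_mono_of_nonneg
    (Filter.Eventually.of_forall fun t => I01_nonneg γ T t)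
    (integrable_V hT ((T ^ 2)⁻¹ / (4 * γ.re ^ 3)))
    ((MeasureTheory.ae_restrict_iff' measurableSet_Ioi).mpr
      (Filter.Eventually.of_forall fun t ht => bound_I01 hl hT t ht))) (le_of_eq (integral_V hT _))

lemma integral_I10_le {γ : ℂ} {T : ℝ} (hl : 0 < γ.re) (hT : 0 < T) :
    ∫ t in Set.Ioi (0:ℝ), I10 γ T t ≤ (T ^ 2)⁻¹ / (4 * γ.re ^ 3) * T := by
  refine le_trans (integral_mono_of_nonneg
    (Filter.Eventually.of_forall fun t => I10_nonneg γ T t)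
    (integrable_V hT ((T ^ 2)⁻¹ / (4 * γ.re ^ 3)))
    ((MeasureTheory.ae_restrict_iff' measurableSet_Ioi).mpr
      (Filter.Eventually.of_forall fun t ht => bound_I10 hl hT t ht))) (le_of_eq (integral_V hT _))

/-! ### Lower bound -/

lemma sq_abs_F01_lower {γ : ℂ} {T : ℝ} (hl : 0 < γ.re) (hT : 0 < T) {t s : ℝ}
    (htl : 2 < t) (htu : t ≤ T) (hs : s ∈ Set.Ioc (t - 1) t) :
    (Real.exp (-γ.re) - Real.exp (-(3 * γ.re))) ^ 2 / (4 * γ.re ^ 2) * (T ^ 2)⁻¹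
      ≤ ‖F01 γ T t s‖ ^ 2 := by
  obtain ⟨hs1, hs2⟩ := hs
  have hcond : 0 < t ∧ t ≤ T ∧ 0 < s ∧ s ≤ T :=
    ⟨by linarith, htu, by linarith, by linarith⟩
  rw [abs_F01 hl hT hcond]
  have hts : |t - s| = t - s := abs_of_nonneg (by linarith)
  have hA : Real.exp (-γ.re) ≤ Real.exp (-(γ.re * |t - s|)) := by
    apply Real.exp_le_exp.mpr
    rw [hts]
    nlinarith
  have hB : Real.exp (-(γ.re * (t + s))) ≤ Real.exp (-(3 * γ.re)) := by
    apply Real.exp_le_exp.mpr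
    nlinarith
  have hd0 : 0 ≤ Real.exp (-γ.re) - Real.exp (-(3 * γ.re)) :=
    sub_nonneg.mpr (Real.exp_le_exp.mpr (by linarith))
  have h1 : Real.exp (-γ.re) - Real.exp (-(3 * γ.re))
      ≤ Real.exp (-(γ.re * |t - s|)) - Real.exp (-(γ.re * (t + s))) := by linarith
  have hstep : T⁻¹ * ((Real.exp (-γ.re) - Real.exp (-(3 * γ.re))) / (2 * γ.re))
      ≤ T⁻¹ * ((Real.exp (-(γ.re * |t - s|)) - Real.exp (-(γ.re * (t + s)))) / (2 * γ.re)) := by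
    gcongr
  calc (Real.exp (-γ.re) - Real.exp (-(3 * γ.re))) ^ 2 / (4 * γ.re ^ 2) * (T ^ 2)⁻¹
      = (T⁻¹ * ((Real.exp (-γ.re) - Real.exp (-(3 * γ.re))) / (2 * γ.re))) ^ 2 := by ring
    _ ≤ (T⁻¹ * ((Real.exp (-(γ.re * |t - s|)) - Real.exp (-(γ.re * (t + s)))) / (2 * γ.re))) ^ 2 :=
        pow_le_pow_left₀ (by positivity) hstep 2

lemma I01_lower {γ : ℂ} {T : ℝ} (hl : 0 < γ.re) (hT : 0 < T) {t : ℝ}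
    (htl : 2 < t) (htu : t ≤ T) :
    (Real.exp (-γ.re) - Real.exp (-(3 * γ.re))) ^ 2 / (4 * γ.re ^ 2) * (T ^ 2)⁻¹
      ≤ I01 γ T t := by
  have hsubset : Set.Ioc (t - 1) t ⊆ Set.Ioi (0:ℝ) := fun x hx => lt_trans (by linarith) hx.1
  have hstep1 : ∫ s in Set.Ioc (t - 1) t, ‖F01 γ T t s‖ ^ 2 ≤ I01 γ T t :=
    setIntegral_mono_set (integrableOn_sq01 hl hT t)
      (Filter.Eventually.of_forall fun s => by positivity)
      (HasSubset.Subset.eventuallyLE hsubset)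
  have hconst : ∫ _ in Set.Ioc (t - 1) t,
      ((Real.exp (-γ.re) - Real.exp (-(3 * γ.re))) ^ 2 / (4 * γ.re ^ 2) * (T ^ 2)⁻¹ : ℝ)
      = (Real.exp (-γ.re) - Real.exp (-(3 * γ.re))) ^ 2 / (4 * γ.re ^ 2) * (T ^ 2)⁻¹ := by
    rw [setIntegral_const, Real.volume_real_Ioc, show t - (t - 1) = 1 by ring,
      max_eq_left (zero_le_one : (0:ℝ) ≤ 1), one_smul]
  have hstep2 : ∫ _ in Set.Ioc (t - 1) t,
      ((Real.exp (-γ.re) - Real.exp (-(3 * γ.re))) ^ 2 / (4 * γ.re ^ 2) * (T ^ 2)⁻¹ : ℝ)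
      ≤ ∫ s in Set.Ioc (t - 1) t, ‖F01 γ T t s‖ ^ 2 := by
    refine setIntegral_mono_on (integrableOn_const measure_Ioc_lt_top.ne)
      ((integrableOn_sq01 hl hT t).mono_set hsubset) measurableSet_Ioc
      (fun s hs => sq_abs_F01_lower hl hT htl htu hs)
  linarith [hconst ▸ hstep2, hstep1]

lemma integral_I01_lower {γ : ℂ} {T : ℝ} (hl : 0 < γ.re) (hT4 : 4 ≤ T) :
    (Real.exp (-γ.re) - Real.exp (-(3 * γ.re))) ^ 2 / (4 * γ.re ^ 2) / 2 / T
      ≤ ∫ t in Set.Ioi (0:ℝ), I01 γ T t := by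
  have hT : 0 < T := by linarith
  set κ := (Real.exp (-γ.re) - Real.exp (-(3 * γ.re))) ^ 2 / (4 * γ.re ^ 2) with hκ
  have hκ0 : 0 ≤ κ := by positivity
  have hsubset : Set.Ioc (2:ℝ) T ⊆ Set.Ioi (0:ℝ) := fun x hx => lt_trans (by norm_num) hx.1
  have hstep1 : ∫ t in Set.Ioc (2:ℝ) T, I01 γ T t ≤ ∫ t in Set.Ioi (0:ℝ), I01 γ T t :=
    setIntegral_mono_set (integrableOn_I01 hl hT)
      (Filter.Eventually.of_forall fun t => I01_nonneg γ T t)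
      (HasSubset.Subset.eventuallyLE hsubset)
  have hstep2 : ∫ _ in Set.Ioc (2:ℝ) T, (κ * (T ^ 2)⁻¹ : ℝ)
      ≤ ∫ t in Set.Ioc (2:ℝ) T, I01 γ T t := by
    refine setIntegral_mono_on (integrableOn_const measure_Ioc_lt_top.ne)
      ((integrableOn_I01 hl hT).mono_set hsubset) measurableSet_Ioc
      (fun t ht => I01_lower hl hT ht.1 ht.2)
  have hconst : ∫ _ in Set.Ioc (2:ℝ) T, (κ * (T ^ 2)⁻¹ : ℝ) = κ * (T ^ 2)⁻¹ * (T - 2) := by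
    rw [setIntegral_const, Real.volume_real_Ioc, max_eq_left (by linarith), smul_eq_mul]
    ring
  have hfinal : κ / 2 / T ≤ κ * (T ^ 2)⁻¹ * (T - 2) := by
    have h1 : (T ^ 2)⁻¹ * (T - 2) ≥ 1 / (2 * T) := by
      rw [ge_iff_le, div_le_iff₀ (by positivity)]
      rw [inv_mul_eq_div, div_mul_eq_mul_div, le_div_iff₀ (by positivity)]
      nlinarith
    have h2 : κ * (1 / (2 * T)) ≤ κ * ((T ^ 2)⁻¹ * (T - 2)) :=
      mul_le_mul_of_nonneg_left h1 hκ0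
    calc κ / 2 / T = κ * (1 / (2 * T)) := by ring
      _ ≤ κ * ((T ^ 2)⁻¹ * (T - 2)) := h2
      _ = κ * (T ^ 2)⁻¹ * (T - 2) := by ring
  linarith [hconst ▸ hstep2]

lemma kerNormSq01_eq (γ : ℂ) {T : ℝ} (hl : 0 < γ.re) (hT : 0 < T) :
    kerNormSq (contr01 (psiKer γ T) (hKer γ T)) = ∫ t in Set.Ioi (0:ℝ), I01 γ T t := by
  unfold kerNormSq I01
  refine setIntegral_congr_fun measurableSet_Ioi fun t ht => ?_
  refine setIntegral_congr_fun measurableSet_Ioi fun s hs => ?_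
  rw [contr01_eq' γ hl hT ht hs]

lemma kerNormSq10_eq (γ : ℂ) {T : ℝ} (hl : 0 < γ.re) (hT : 0 < T) :
    kerNormSq (contr10 (psiKer γ T) (hKer γ T)) = ∫ t in Set.Ioi (0:ℝ), I10 γ T t := by
  unfold kerNormSq I10
  refine setIntegral_congr_fun measurableSet_Ioi fun t ht => ?_
  refine setIntegral_congr_fun measurableSet_Ioi fun s hs => ?_
  rw [contr10_eq' γ hl hT ht hs]

/-- For `γ ∈ ℂ` with `Re γ > 0` there are constants `0 < c₁ ≤ c₂ < ∞` and
`T₀ > 0`, depending only on `γ`, such that for all `T ≥ T₀`,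
`c₁ T⁻¹ ≤ ‖ψ_T ⊗_{0,1} h_T‖² + ‖ψ_T ⊗_{1,0} h_T‖² ≤ c₂ T⁻¹`. -/
theorem contraction_normSq_bounds (γ : ℂ) (hγ : 0 < γ.re) :
    ∃ c₁ c₂ T₀ : ℝ, 0 < c₁ ∧ c₁ ≤ c₂ ∧ 0 < T₀ ∧ ∀ T, T₀ ≤ T →
      c₁ / T
          ≤ kerNormSq (contr01 (psiKer γ T) (hKer γ T))
              + kerNormSq (contr10 (psiKer γ T) (hKer γ T))
        ∧ kerNormSq (contr01 (psiKer γ T) (hKer γ T))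
              + kerNormSq (contr10 (psiKer γ T) (hKer γ T))
          ≤ c₂ / T := by
  have hd : 0 < Real.exp (-γ.re) - Real.exp (-(3 * γ.re)) :=
    sub_pos.mpr (Real.exp_lt_exp.mpr (by linarith))
  refine ⟨(Real.exp (-γ.re) - Real.exp (-(3 * γ.re))) ^ 2 / (4 * γ.re ^ 2) / 2,
    1 / (2 * γ.re ^ 3), 4, by positivity, ?_, by norm_num, ?_⟩
  · -- c₁ ≤ c₂
    set d := Real.exp (-γ.re) - Real.exp (-(3 * γ.re)) with hddef
    have hdle : d ≤ Real.exp (-γ.re) := by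
      have := Real.exp_pos (-(3 * γ.re))
      rw [hddef]; linarith
    have h2 : d ^ 2 ≤ Real.exp (-γ.re) ^ 2 := pow_le_pow_left₀ hd.le hdle 2
    have h3 : Real.exp (-γ.re) ^ 2 = Real.exp (-(2 * γ.re)) := by
      rw [sq, ← Real.exp_add]; ring_nf
    rw [h3] at h2
    have h4 : Real.exp (-(2 * γ.re)) * γ.re < 1 := by
      have h5 : γ.re < Real.exp (2 * γ.re) :=
        lt_of_lt_of_le (by linarith) (Real.add_one_le_exp (2 * γ.re))
      have h6 := mul_lt_mul_of_pos_left h5 (inv_pos.mpr (Real.exp_pos (2 * γ.re)))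
      rw [inv_mul_cancel₀ (ne_of_gt (Real.exp_pos (2 * γ.re)))] at h6
      rw [Real.exp_neg]
      linarith
    have key : d ^ 2 * γ.re ≤ 1 := by nlinarith [Real.exp_pos (-(2 * γ.re))]
    calc d ^ 2 / (4 * γ.re ^ 2) / 2 = d ^ 2 * γ.re / (8 * γ.re ^ 3) := by
          field_simp; ring
      _ ≤ 1 / (8 * γ.re ^ 3) := by gcongr
      _ ≤ 1 / (2 * γ.re ^ 3) :=
          one_div_le_one_div_of_le (by positivity) (by nlinarith [pow_pos hγ 3])
  · intro T hT4
    have hT : 0 < T := by linarith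
    have h01 := kerNormSq01_eq γ hγ hT
    have h10 := kerNormSq10_eq γ hγ hT
    constructor
    · have hlow := integral_I01_lower hγ hT4
      have h10nn : 0 ≤ kerNormSq (contr10 (psiKer γ T) (hKer γ T)) :=
        integral_nonneg fun t => integral_nonneg fun s => by positivity
      rw [h01]
      linarith
    · rw [h01, h10]
      have u1 := integral_I01_le hγ hT
      have u2 := integral_I10_le hγ hT
      have heq : (T ^ 2)⁻¹ / (4 * γ.re ^ 3) * T + (T ^ 2)⁻¹ / (4 * γ.re ^ 3) * T
          = 1 / (2 * γ.re ^ 3) / T := by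
        field_simp
        ring
      linarith
end
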